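/- Let (Ω,ρ) be a metric space, {Ω_i}_{i∈[m]} a partition of Ω with chosen representatives ω_i ∈ Ω_i, and S ∈ Ω^n with counts n_i = |{j ∈ [n] : S[j] ∈ Ω_i}|. Let μ̄ = Σ_i (n_i/n)·δ_{ω_i}, let μ̃ be any signed measure supported on {ω_1,…,ω_m}, let μ̂ be a minimizer of BL(μ̃, ·) over probability measures supported on {ω_1,…,ω_m}, and let μ be any finitely supported probability measure on Ω with μ(Ω_i) = μ̂({ω_i}) for all i ∈ [m]. Then BL(μ_S, μ) ≤ 2·(max_{i∈[m]} diam(Ω_i) + BL(μ̄, μ̃)). -/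

import Mathlib

open MeasureTheory Real Set

noncomputable section

/-- The class of bounded 1-Lipschitz functions on a metric space. -/
def FBL (Ω : Type*) [PseudoMetricSpace Ω] : Set (Ω → ℝ) :=
  {f | (∀ z, |f z| ≤ Metric.diam (Set.univ : Set Ω)) ∧
       ∀ z1 z2, f z1 - f z2 ≤ dist z1 z2}

/-- Bounded-Lipschitz distance between finitely supported signed measures. -/
def BL2 {Ω : Type*} [PseudoMetricSpace Ω] {n m : ℕ}
    (x : Fin n → Ω) (a : Fin n → ℝ) (y : Fin m → Ω) (b : Fin m → ℝ) : ℝ :=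
  ⨆ f : FBL Ω, ((∑ i, a i * (f : Ω → ℝ) (x i)) - ∑ j, b j * (f : Ω → ℝ) (y j))

/-- probability vector in the simplex Δ_m -/
def probVec {m : ℕ} (b : Fin m → ℝ) : Prop := (∀ j, 0 ≤ b j) ∧ ∑ j, b j = 1

section aux
variable {Ω : Type*} [PseudoMetricSpace Ω]

lemma zero_mem_FBL : (fun _ : Ω => (0:ℝ)) ∈ FBL Ω := by
  constructor
  · intro z; simpa using Metric.diam_nonneg
  · intro z1 z2; simpa using dist_nonneg

instance : Nonempty (FBL Ω) := ⟨⟨_, zero_mem_FBL⟩⟩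

lemma neg_mem_FBL {f : Ω → ℝ} (hf : f ∈ FBL Ω) : (fun z => -(f z)) ∈ FBL Ω := by
  obtain ⟨h1, h2⟩ := hf
  refine ⟨fun z => by simpa using h1 z, fun z1 z2 => ?_⟩
  have := h2 z2 z1
  rw [dist_comm] at this
  simpa using by linarith

lemma term_le {n m : ℕ} (x : Fin n → Ω) (a : Fin n → ℝ) (y : Fin m → Ω) (b : Fin m → ℝ)
    {f : Ω → ℝ} (hf : f ∈ FBL Ω) :
    (∑ i, a i * f (x i)) - ∑ j, b j * f (y j)
      ≤ (∑ i, |a i| + ∑ j, |b j|) * Metric.diam (Set.univ : Set Ω) := by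
  have h1 : (∑ i, a i * f (x i)) ≤ ∑ i, |a i| * Metric.diam (Set.univ : Set Ω) := by
    refine Finset.sum_le_sum fun i _ => ?_
    calc a i * f (x i) ≤ |a i * f (x i)| := le_abs_self _
    _ = |a i| * |f (x i)| := abs_mul _ _
    _ ≤ |a i| * Metric.diam (Set.univ : Set Ω) :=
        mul_le_mul_of_nonneg_left (hf.1 _) (abs_nonneg _)
  have h2 : -(∑ j, b j * f (y j)) ≤ ∑ j, |b j| * Metric.diam (Set.univ : Set Ω) := by
    rw [← Finset.sum_neg_distrib]
    refine Finset.sum_le_sum fun j _ => ?_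
    calc -(b j * f (y j)) ≤ |b j * f (y j)| := neg_le_abs _
    _ = |b j| * |f (y j)| := abs_mul _ _
    _ ≤ |b j| * Metric.diam (Set.univ : Set Ω) :=
        mul_le_mul_of_nonneg_left (hf.1 _) (abs_nonneg _)
  rw [add_mul, Finset.sum_mul, Finset.sum_mul]
  linarith

lemma BL2_bddAbove {n m : ℕ} (x : Fin n → Ω) (a : Fin n → ℝ) (y : Fin m → Ω) (b : Fin m → ℝ) :
    BddAbove (Set.range fun f : FBL Ω =>
      ((∑ i, a i * (f : Ω → ℝ) (x i)) - ∑ j, b j * (f : Ω → ℝ) (y j))) := by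
  refine ⟨(∑ i, |a i| + ∑ j, |b j|) * Metric.diam (Set.univ : Set Ω), ?_⟩
  rintro _ ⟨f, rfl⟩
  exact term_le x a y b f.2

lemma le_BL2 {n m : ℕ} (x : Fin n → Ω) (a : Fin n → ℝ) (y : Fin m → Ω) (b : Fin m → ℝ)
    {f : Ω → ℝ} (hf : f ∈ FBL Ω) :
    (∑ i, a i * f (x i)) - ∑ j, b j * f (y j) ≤ BL2 x a y b :=
  le_ciSup (BL2_bddAbove x a y b) ⟨f, hf⟩

lemma BL2_le {n m : ℕ} (x : Fin n → Ω) (a : Fin n → ℝ) (y : Fin m → Ω) (b : Fin m → ℝ)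
    {M : ℝ} (h : ∀ f ∈ FBL Ω, (∑ i, a i * f (x i)) - ∑ j, b j * f (y j) ≤ M) :
    BL2 x a y b ≤ M :=
  ciSup_le fun f => h f.1 f.2

lemma BL2_nonneg {n m : ℕ} (x : Fin n → Ω) (a : Fin n → ℝ) (y : Fin m → Ω) (b : Fin m → ℝ) :
    0 ≤ BL2 x a y b := by
  have := le_BL2 x a y b zero_mem_FBL
  simpa using this

lemma BL2_symm_le {n m : ℕ} (x : Fin n → Ω) (a : Fin n → ℝ) (y : Fin m → Ω) (b : Fin m → ℝ) :
    BL2 x a y b ≤ BL2 y b x a := by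
  refine BL2_le x a y b fun f hf => ?_
  have h := le_BL2 y b x a (neg_mem_FBL hf)
  simp only [mul_neg, Finset.sum_neg_distrib] at h
  linarith

lemma BL2_symm {n m : ℕ} (x : Fin n → Ω) (a : Fin n → ℝ) (y : Fin m → Ω) (b : Fin m → ℝ) :
    BL2 x a y b = BL2 y b x a :=
  le_antisymm (BL2_symm_le x a y b) (BL2_symm_le y b x a)

lemma BL2_triangle {n m k : ℕ} (x : Fin n → Ω) (a : Fin n → ℝ) (y : Fin m → Ω) (b : Fin m → ℝ)
    (z : Fin k → Ω) (c : Fin k → ℝ) :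
    BL2 x a z c ≤ BL2 x a y b + BL2 y b z c := by
  refine BL2_le x a z c fun f hf => ?_
  have h1 := le_BL2 x a y b hf
  have h2 := le_BL2 y b z c hf
  linarith

end aux

/-- Deterministic part of the PSMM analysis: the output measure is within
2(max_i diam Ω_i + BL(μ̄, μ̃)) of the empirical measure in BL distance. -/
theorem psmm_deterministic_bound
    {Ω : Type*} [MetricSpace Ω] {m n K : ℕ} (hm : 0 < m) (hn : 0 < n)
    (P : Fin m → Set Ω) (hdisj : Pairwise (Function.onFun Disjoint P))
    (hcover : ⋃ i, P i = Set.univ)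
    (ω : Fin m → Ω) (hω : ∀ i, ω i ∈ P i)
    (S : Fin n → Ω)
    (μbar : Fin m → ℝ)
    (hμbar : ∀ i, μbar i = (Nat.card {j : Fin n // S j ∈ P i} : ℝ) / n)
    (μt : Fin m → ℝ)
    (μh : Fin m → ℝ)
    (hμh : probVec μh ∧ ∀ ν : Fin m → ℝ, probVec ν → BL2 ω μt ω μh ≤ BL2 ω μt ω ν)
    (y : Fin K → Ω) (c : Fin K → ℝ) (hc : probVec c)
    (hmatch : ∀ i, ∑ j, (P i).indicator (fun _ => c j) (y j) = μh i) :
    BL2 S (fun _ => (n : ℝ)⁻¹) y c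
      ≤ 2 * ((⨆ i, Metric.diam (P i)) + BL2 ω μbar ω μt) := by
  classical
  set D := ⨆ i, Metric.diam (P i) with hDdef
  have hD0 : 0 ≤ D := Real.iSup_nonneg fun i => Metric.diam_nonneg
  have hRHS0 : 0 ≤ D + BL2 ω μbar ω μt := add_nonneg hD0 (BL2_nonneg _ _ _ _)
  -- classification map
  have hex : ∀ z : Ω, ∃ i, z ∈ P i := fun z => by
    have : z ∈ ⋃ i, P i := hcover ▸ Set.mem_univ z
    exact Set.mem_iUnion.mp this
  set cl : Ω → Fin m := fun z => (hex z).choose with hcldef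
  have hcl : ∀ z, z ∈ P (cl z) := fun z => (hex z).choose_spec
  have huniq : ∀ z i, z ∈ P i → cl z = i := by
    intro z i hz
    by_contra h
    exact Set.disjoint_left.mp (hdisj h) (hcl z) hz
  have hmemiff : ∀ (z : Ω) (i : Fin m), z ∈ P i ↔ cl z = i := by
    intro z i
    exact ⟨huniq z i, fun h => h ▸ hcl z⟩
  have hnne : (n : ℝ) ≠ 0 := Nat.cast_ne_zero.mpr hn.ne'
  -- μbar expressed via fibers of cl ∘ S
  have hμbar' : ∀ i, μbar i =
      ((Finset.univ.filter fun j => cl (S j) = i).card : ℝ) / n := by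
    intro i
    rw [hμbar i]
    congr 2
    rw [Nat.card_eq_fintype_card, Fintype.card_subtype]
    congr 1
    ext j
    simp [hmemiff]
  -- μbar is a probability vector
  have hpv : probVec μbar := by
    constructor
    · intro i
      rw [hμbar' i]
      exact div_nonneg (Nat.cast_nonneg _) (Nat.cast_nonneg _)
    · have hcard : (Finset.univ : Finset (Fin n)).card =
          ∑ i, (Finset.univ.filter fun j => cl (S j) = i).card :=
        Finset.card_eq_sum_card_fiberwise (fun j _ => Finset.mem_univ _)
      have : ∑ i, μbar i = (∑ i, ((Finset.univ.filter fun j => cl (S j) = i).card : ℝ)) / n := by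
        rw [Finset.sum_div]
        exact Finset.sum_congr rfl fun i _ => hμbar' i
      rw [this, ← Nat.cast_sum, ← hcard]
      simp [hnne]
  -- case: unbounded space
  by_cases hb : Bornology.IsBounded (Set.univ : Set Ω)
  · -- bounded case
    have hDle : ∀ i, Metric.diam (P i) ≤ D :=
      fun i => le_ciSup (f := fun i => Metric.diam (P i)) (Set.Finite.bddAbove (Set.finite_range _)) i
    have hbd : ∀ i, Bornology.IsBounded (P i) := fun i => hb.subset (Set.subset_univ _)
    -- rewriting lemma A
    have hA : ∀ f : Ω → ℝ, ∑ i, μbar i * f (ω i) = ∑ j, (n : ℝ)⁻¹ * f (ω (cl (S j))) := by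
      intro f
      rw [← Finset.sum_fiberwise Finset.univ (fun j => cl (S j))
        (fun j => (n : ℝ)⁻¹ * f (ω (cl (S j))))]
      refine Finset.sum_congr rfl fun i _ => ?_
      rw [hμbar' i]
      rw [Finset.sum_congr rfl (fun j hj => by
        rw [(Finset.mem_filter.mp hj).2])]
      rw [Finset.sum_const, nsmul_eq_mul]
      ring
    -- rewriting lemma B
    have hB : ∀ f : Ω → ℝ, ∑ i, μh i * f (ω i) = ∑ j, c j * f (ω (cl (y j))) := by
      intro f
      have : ∀ i, μh i = ∑ j, if cl (y j) = i then c j else 0 := by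
        intro i
        rw [← hmatch i]
        refine Finset.sum_congr rfl fun j _ => ?_
        by_cases h : y j ∈ P i
        · rw [Set.indicator_of_mem h, if_pos (huniq _ _ h)]
        · rw [Set.indicator_of_notMem h, if_neg (fun (he : cl (y j) = i) => h (he ▸ hcl (y j)))]
      calc ∑ i, μh i * f (ω i)
          = ∑ i, ∑ j, (if cl (y j) = i then c j else 0) * f (ω i) := by
            refine Finset.sum_congr rfl fun i _ => ?_
            rw [this i, Finset.sum_mul]
        _ = ∑ j, ∑ i, (if cl (y j) = i then c j * f (ω i) else 0) := by
            rw [Finset.sum_comm]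
            exact Finset.sum_congr rfl fun j _ => Finset.sum_congr rfl fun i _ => by
              split <;> simp
        _ = ∑ j, c j * f (ω (cl (y j))) := by
            refine Finset.sum_congr rfl fun j _ => ?_
            rw [Finset.sum_ite_eq]
            simp
    -- bound 1 : BL2 μ_S μ̄ ≤ D
    have t1 : BL2 S (fun _ => (n : ℝ)⁻¹) ω μbar ≤ D := by
      refine BL2_le _ _ _ _ fun f hf => ?_
      rw [hA f, ← Finset.sum_sub_distrib]
      calc ∑ j, ((n : ℝ)⁻¹ * f (S j) - (n : ℝ)⁻¹ * f (ω (cl (S j))))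
          ≤ ∑ _j : Fin n, (n : ℝ)⁻¹ * D := by
            refine Finset.sum_le_sum fun j _ => ?_
            rw [← mul_sub]
            refine mul_le_mul_of_nonneg_left ?_ (by positivity)
            calc f (S j) - f (ω (cl (S j))) ≤ dist (S j) (ω (cl (S j))) := hf.2 _ _
            _ ≤ Metric.diam (P (cl (S j))) :=
                Metric.dist_le_diam_of_mem (hbd _) (hcl _) (hω _)
            _ ≤ D := hDle _
        _ = D := by
            rw [Finset.sum_const, nsmul_eq_mul, Finset.card_univ, Fintype.card_fin]
            field_simp
    -- bound 2 : BL2 μ̂ μ ≤ D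
    have t2 : BL2 ω μh y c ≤ D := by
      refine BL2_le _ _ _ _ fun f hf => ?_
      rw [hB f, ← Finset.sum_sub_distrib]
      calc ∑ j, (c j * f (ω (cl (y j))) - c j * f (y j))
          ≤ ∑ j, c j * D := by
            refine Finset.sum_le_sum fun j _ => ?_
            rw [← mul_sub]
            refine mul_le_mul_of_nonneg_left ?_ (hc.1 j)
            calc f (ω (cl (y j))) - f (y j) ≤ dist (ω (cl (y j))) (y j) := hf.2 _ _
            _ ≤ Metric.diam (P (cl (y j))) :=
                Metric.dist_le_diam_of_mem (hbd _) (hω _) (hcl _)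
            _ ≤ D := hDle _
        _ = D := by rw [← Finset.sum_mul, hc.2, one_mul]
    -- bound 3
    have t3 : BL2 ω μt ω μh ≤ BL2 ω μbar ω μt := by
      calc BL2 ω μt ω μh ≤ BL2 ω μt ω μbar := hμh.2 μbar hpv
      _ = BL2 ω μbar ω μt := BL2_symm _ _ _ _
    -- chain of triangle inequalities
    have c1 := BL2_triangle S (fun _ => (n : ℝ)⁻¹) ω μbar y c
    have c2 := BL2_triangle ω μbar ω μt y c
    have c3 := BL2_triangle ω μt ω μh y c
    linarith
  · -- unbounded case: FBL consists of just the zero function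
    have hdum : Metric.diam (Set.univ : Set Ω) = 0 := Metric.diam_eq_zero_of_unbounded hb
    have hlhs : BL2 S (fun _ => (n : ℝ)⁻¹) y c ≤ 0 := by
      refine BL2_le _ _ _ _ fun f hf => ?_
      have hz : ∀ z, f z = 0 := fun z =>
        abs_eq_zero.mp (le_antisymm (hdum ▸ hf.1 z) (abs_nonneg _))
      simp [hz]
    linarith

end
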